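/- Let Γ be a simple graph of order n and size m, and let λ be the spectral radius of Γ (the largest eigenvalue of the adjacency matrix of Γ). Then every global dual alliance S in Γ satisfies |S| ≥ ⌈(2m+n)/(4(λ+1))⌉; in particular the global dual alliance number satisfies γ_{a_d}(Γ) ≥ ⌈(2m+n)/(4(λ+1))⌉. -/

import Mathlib

open Finset SimpleGraph

open Matrix

/-- `μ` is the second smallest (counted with multiplicity) value of the family `e`. -/
def IsSecondSmallest {ι : Type*} (e : ι → ℝ) (μ : ℝ) : Prop :=
  ∃ i₀ i₁ : ι, i₀ ≠ i₁ ∧ e i₀ ≤ μ ∧ e i₁ = μ ∧ ∀ j : ι, j ≠ i₀ → μ ≤ e j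

/-- `lam` is the largest value of the family `e`. -/
def IsLargest {ι : Type*} (e : ι → ℝ) (lam : ℝ) : Prop :=
  (∃ i : ι, e i = lam) ∧ ∀ i : ι, e i ≤ lam

/-- Rayleigh bound: the quadratic form of a real symmetric matrix is bounded by its largest
eigenvalue times the squared norm. -/
lemma rayleigh_le_aux {ι : Type*} [Fintype ι] [DecidableEq ι] {A : Matrix ι ι ℝ}
    (hA : A.IsHermitian) {lam : ℝ} (hl : ∀ i, hA.eigenvalues i ≤ lam) (x : ι → ℝ) :
    x ⬝ᵥ (A *ᵥ x) ≤ lam * (x ⬝ᵥ x) := by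
  classical
  obtain ⟨e, U, hle, hUU, hDiag⟩ : ∃ (e : ι → ℝ) (U : Matrix ι ι ℝ),
      (∀ i, e i ≤ lam) ∧ U * Uᵀ = 1 ∧ A = U * Matrix.diagonal e * Uᵀ := by
    refine ⟨hA.eigenvalues, (hA.eigenvectorUnitary : Matrix ι ι ℝ), hl, ?_, ?_⟩
    · have hstar : star (hA.eigenvectorUnitary : Matrix ι ι ℝ)
          = (hA.eigenvectorUnitary : Matrix ι ι ℝ)ᵀ := by
        rw [Matrix.star_eq_conjTranspose, Matrix.conjTranspose_eq_transpose_of_trivial]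
      rw [← hstar]; exact (Matrix.mem_unitaryGroup_iff).mp hA.eigenvectorUnitary.2
    · have hstar : star (hA.eigenvectorUnitary : Matrix ι ι ℝ)
          = (hA.eigenvectorUnitary : Matrix ι ι ℝ)ᵀ := by
        rw [Matrix.star_eq_conjTranspose, Matrix.conjTranspose_eq_transpose_of_trivial]
      rw [← hstar]
      convert hA.spectral_theorem using 2
      simp [Unitary.conjStarAlgAut_apply, Function.comp_def]
  rw [hDiag]
  set y : ι → ℝ := Uᵀ *ᵥ x with hy
  have key : x ⬝ᵥ ((U * Matrix.diagonal e * Uᵀ) *ᵥ x) = ∑ i, e i * (y i)^2 := by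
    rw [← Matrix.mulVec_mulVec, ← Matrix.mulVec_mulVec, Matrix.dotProduct_mulVec x U,
      ← Matrix.mulVec_transpose, ← hy]
    simp only [dotProduct, Matrix.mulVec_diagonal]
    exact Finset.sum_congr rfl fun i _ => by ring
  have key2 : x ⬝ᵥ x = ∑ i, (y i)^2 := by
    have h1 : (∑ i, (y i)^2) = y ⬝ᵥ y := by simp [dotProduct, sq]
    rw [h1, hy, Matrix.dotProduct_mulVec, Matrix.vecMul_transpose, Matrix.mulVec_mulVec, hUU,
      Matrix.one_mulVec]
  rw [key, key2, Finset.mul_sum]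
  exact Finset.sum_le_sum fun i _ => mul_le_mul_of_nonneg_right (hle i) (sq_nonneg _)

theorem stmt_14 {V : Type*} [Fintype V] [DecidableEq V]
    (G : SimpleGraph V) [DecidableRel G.Adj]
    (n : ℕ) (hn : Fintype.card V = n)
    (m : ℕ) (hm : G.edgeFinset.card = m)
    (lam : ℝ)
    (hlam : ∃ hA : (G.adjMatrix ℝ).IsHermitian, IsLargest hA.eigenvalues lam)
    (S : Finset V) (hS : S.Nonempty)
    (hdef : ∀ v ∈ S, (G.neighborFinset v \ S).card ≤ (G.neighborFinset v ∩ S).card + 1)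
    (hoff : ∀ v ∉ S, (G.neighborFinset v \ S).card + 1 ≤ (G.neighborFinset v ∩ S).card)
    :
    ⌈(2 * (m : ℝ) + n) / (4 * (lam + 1))⌉ ≤ (S.card : ℤ) := by
  classical
  obtain ⟨hA, -, hl⟩ := hlam
  set c : V → ℕ := fun v => (G.neighborFinset v ∩ S).card with hc
  set t : ℕ := ∑ u ∈ S, c u with ht
  -- nonnegativity of lam
  obtain ⟨v₀, hv₀⟩ := hS
  have hlam0 : 0 ≤ lam := by
    have h0 := rayleigh_le_aux hA hl (Pi.single v₀ 1)
    have e1 : (Pi.single v₀ (1:ℝ)) ⬝ᵥ (G.adjMatrix ℝ *ᵥ Pi.single v₀ 1) = 0 := by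
      simp only [dotProduct, Matrix.mulVec, Pi.single_apply]
      refine Finset.sum_eq_zero fun i _ => ?_
      by_cases h : i = v₀ <;> simp [h, dotProduct, Pi.single_apply, SimpleGraph.irrefl]
    have e2 : (Pi.single v₀ (1:ℝ)) ⬝ᵥ (Pi.single v₀ (1:ℝ)) = 1 := by
      simp [dotProduct, Pi.single_apply]
    rw [e1, e2, mul_one] at h0
    exact h0
  -- the indicator vector
  set x : V → ℝ := fun v => if v ∈ S then 1 else 0 with hx
  have hmv : ∀ v, (G.adjMatrix ℝ *ᵥ x) v = (c v : ℝ) := by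
    intro v
    rw [SimpleGraph.adjMatrix_mulVec_apply]
    simp [hx, hc, Finset.sum_ite_mem]
  have hquad : x ⬝ᵥ (G.adjMatrix ℝ *ᵥ x) = (t : ℝ) := by
    unfold dotProduct
    rw [Finset.sum_congr rfl fun v _ => by rw [hmv v]]
    rw [ht]
    push_cast
    simp only [hx, ite_mul, one_mul, zero_mul]
    rw [Finset.sum_ite_mem, Finset.univ_inter]
  have hxx : x ⬝ᵥ x = (S.card : ℝ) := by
    unfold dotProduct
    have hv : ∀ v, x v * x v = if v ∈ S then (1:ℝ) else 0 := fun v => by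
      by_cases h : v ∈ S <;> simp [hx, h]
    simp only [hv]
    rw [Finset.sum_ite_mem, Finset.univ_inter, Finset.sum_const, nsmul_eq_mul, mul_one]
  have hray : (t : ℝ) ≤ lam * S.card := by
    have := rayleigh_le_aux hA hl x
    rwa [hquad, hxx] at this
  -- combinatorial bound : 2m + n ≤ 4t + 4|S|
  set d : V → ℕ := fun v => (G.neighborFinset v \ S).card with hd
  have hdeg : ∀ v, G.degree v = c v + d v := by
    intro v
    rw [← SimpleGraph.card_neighborFinset_eq_degree, hc, hd]
    exact (Finset.card_inter_add_card_sdiff _ _).symm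
  have hT : ∑ v, c v = ∑ u ∈ S, G.degree u := by
    have h1 : ∀ v, c v = ∑ u ∈ S, (if v ∈ G.neighborFinset u then 1 else 0) := by
      intro v
      simp only [hc]
      rw [show G.neighborFinset v ∩ S = S.filter (· ∈ G.neighborFinset v) by
        rw [Finset.filter_mem_eq_inter, Finset.inter_comm]]
      rw [Finset.card_filter]
      exact Finset.sum_congr rfl fun u hu => by
        simp [SimpleGraph.mem_neighborFinset, G.adj_comm]
    rw [Finset.sum_congr rfl fun v _ => h1 v, Finset.sum_comm]
    refine Finset.sum_congr rfl fun u _ => ?_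
    rw [Finset.sum_ite_mem, Finset.univ_inter, Finset.sum_const,
      ← SimpleGraph.card_neighborFinset_eq_degree]
    simp
  have hmain : 2 * m + n ≤ 4 * t + 4 * S.card := by
    have step1 : ∑ v ∈ S, G.degree v + ∑ v ∈ Finset.univ \ S, (G.degree v + 1)
        ≤ ∑ v ∈ S, (2 * c v + 1) + ∑ v ∈ Finset.univ \ S, (2 * c v) := by
      refine Nat.add_le_add (Finset.sum_le_sum fun v hv => ?_)
        (Finset.sum_le_sum fun v hv => ?_)
      · have hc' : c v = #(G.neighborFinset v ∩ S) := rfl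
        have hd' : d v = #(G.neighborFinset v \ S) := rfl
        have := hdef v hv
        rw [hdeg v]; omega
      · have hc' : c v = #(G.neighborFinset v ∩ S) := rfl
        have hd' : d v = #(G.neighborFinset v \ S) := rfl
        have := hoff v (by simpa using (Finset.mem_sdiff.mp hv).2)
        rw [hdeg v]; omega
    have hsplit : ∑ v ∈ S, G.degree v + ∑ v ∈ Finset.univ \ S, G.degree v
        = 2 * m := by
      rw [add_comm, Finset.sum_sdiff (Finset.subset_univ S),
        SimpleGraph.sum_degrees_eq_twice_card_edges, hm]
    have hsplit2 : ∑ v ∈ S, (2 * c v) + ∑ v ∈ Finset.univ \ S, (2 * c v)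
        = 2 * ∑ v, c v := by
      rw [add_comm, Finset.sum_sdiff (Finset.subset_univ S), ← Finset.mul_sum]
    have hcard : S.card + (Finset.univ \ S).card = n := by
      rw [Finset.card_sdiff_of_subset (Finset.subset_univ S), Finset.card_univ, hn]
      have : S.card ≤ n := by rw [← hn, ← Finset.card_univ]; exact Finset.card_le_card (Finset.subset_univ S)
      omega
    have hTle : ∑ v, c v ≤ 2 * t + S.card := by
      rw [hT, ht]
      calc ∑ u ∈ S, G.degree u ≤ ∑ u ∈ S, (2 * c u + 1) :=
            Finset.sum_le_sum fun u hu => by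
              have hc' : c u = #(G.neighborFinset u ∩ S) := rfl
              have hd' : d u = #(G.neighborFinset u \ S) := rfl
              have := hdef u hu; rw [hdeg u]; omega
        _ = 2 * ∑ u ∈ S, c u + S.card := by
            rw [Finset.sum_add_distrib, ← Finset.mul_sum]; simp
    have e1 : ∑ v ∈ Finset.univ \ S, (G.degree v + 1)
        = ∑ v ∈ Finset.univ \ S, G.degree v + (Finset.univ \ S).card := by
      rw [Finset.sum_add_distrib]; simp
    have e2 : ∑ v ∈ S, (2 * c v + 1) = ∑ v ∈ S, (2 * c v) + S.card := by
      rw [Finset.sum_add_distrib]; simp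
    omega
  -- put it together over ℝ
  have hreal : 2 * (m:ℝ) + n ≤ (S.card : ℝ) * (4 * (lam + 1)) := by
    have h1 : (2 * m + n : ℝ) ≤ 4 * (t:ℝ) + 4 * S.card := by
      exact_mod_cast hmain
    nlinarith [hray]
  have hpos : (0:ℝ) < 4 * (lam + 1) := by linarith
  rw [Int.ceil_le]
  push_cast
  rw [div_le_iff₀ hpos]
  linarith
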